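/- Fix i and matrices Ā_{ii} ∈ ℝ^{n_i×n_i}, Ā_{ij} ∈ ℝ^{n_i×n_j} for j ≠ i, and matrices H_l with full column rank and left inverses H_l^♭ (H_l^♭ H_l = I). Let sequences e_l : ℕ → ℝ^{n_l} satisfy the coupled recursion e_i(t+1) = Ā_{ii} e_i(t) + Σ_{j≠i} Ā_{ij} e_j(t). Assume the series γ_{ij} := Σ_{k=0}^∞ ‖H_i Ā_{ii}^k Ā_{ij} H_j^♭‖_∞ converge. Then for every t ≥ 0, ‖H_i e_i(t)‖_∞ ≤ ‖H_i Ā_{ii}^t H_i^♭‖_∞ · ‖H_i e_i(0)‖_∞ + Σ_{j≠i} γ_{ij} · max_{0 ≤ k ≤ t} ‖H_j e_j(k)‖_∞. -/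

import Mathlib

open scoped BigOperators
open Matrix

noncomputable section

/-- Induced infinity norm of a real matrix. -/
def matInfNorm {m n : Type*} [Fintype m] [Fintype n] (A : Matrix m n ℝ) : ℝ :=
  ⨆ i, ∑ j, |A i j|

/-- Infinity norm of a vector. -/
def vecInfNorm {m : Type*} [Fintype m] (v : m → ℝ) : ℝ := ⨆ i, |v i|

lemma vecInfNorm_nonneg {m : Type*} [Fintype m] (v : m → ℝ) : 0 ≤ vecInfNorm v := by
  simp only [vecInfNorm]
  rcases isEmpty_or_nonempty m with h | h
  · simp [vecInfNorm, Real.iSup_of_isEmpty]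
  · obtain ⟨i⟩ := h
    exact le_trans (abs_nonneg (v i)) (le_ciSup (f := fun i => |v i|) (Set.Finite.bddAbove (Set.finite_range _)) i)

lemma le_vecInfNorm {m : Type*} [Fintype m] (v : m → ℝ) (j : m) : |v j| ≤ vecInfNorm v := by
  simp only [vecInfNorm]
  exact le_ciSup (f := fun i => |v i|) (Set.Finite.bddAbove (Set.finite_range _)) j

lemma matInfNorm_nonneg {m n : Type*} [Fintype m] [Fintype n] (A : Matrix m n ℝ) :
    0 ≤ matInfNorm A := by
  simp only [matInfNorm]
  rcases isEmpty_or_nonempty m with h | h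
  · simp [matInfNorm, Real.iSup_of_isEmpty]
  · obtain ⟨i⟩ := h
    exact le_trans (Finset.sum_nonneg fun j _ => abs_nonneg _)
      (le_ciSup (f := fun i => ∑ j, |A i j|) (Set.Finite.bddAbove (Set.finite_range _)) i)

lemma vecInfNorm_mulVec_le {m n : Type*} [Fintype m] [Fintype n]
    (A : Matrix m n ℝ) (v : n → ℝ) :
    vecInfNorm (A.mulVec v) ≤ matInfNorm A * vecInfNorm v := by
  rcases isEmpty_or_nonempty m with h | h
  · rw [show vecInfNorm (A.mulVec v) = 0 by simp [vecInfNorm, Real.iSup_of_isEmpty]]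
    exact mul_nonneg (matInfNorm_nonneg A) (vecInfNorm_nonneg v)
  · simp only [vecInfNorm, matInfNorm, Matrix.mulVec, dotProduct]
    refine ciSup_le fun r => ?_
    calc |∑ j, A r j * v j| ≤ ∑ j, |A r j * v j| := Finset.abs_sum_le_sum_abs _ _
      _ ≤ ∑ j, |A r j| * vecInfNorm v := by
          refine Finset.sum_le_sum fun j _ => ?_
          rw [abs_mul]
          exact mul_le_mul_of_nonneg_left (le_vecInfNorm v j) (abs_nonneg _)
      _ = (∑ j, |A r j|) * vecInfNorm v := by rw [Finset.sum_mul]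
      _ ≤ (⨆ i, ∑ j, |A i j|) * vecInfNorm v :=
          mul_le_mul_of_nonneg_right (le_ciSup (f := fun i => ∑ j, |A i j|) (Set.Finite.bddAbove (Set.finite_range _)) r)
            (vecInfNorm_nonneg v)

lemma vecInfNorm_add_le {m : Type*} [Fintype m] (u v : m → ℝ) :
    vecInfNorm (u + v) ≤ vecInfNorm u + vecInfNorm v := by
  rcases isEmpty_or_nonempty m with h | h
  · rw [show vecInfNorm (u + v) = 0 by simp [vecInfNorm, Real.iSup_of_isEmpty]]
    exact add_nonneg (vecInfNorm_nonneg u) (vecInfNorm_nonneg v)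
  · simp only [vecInfNorm]
    refine ciSup_le fun r => ?_
    exact le_trans (abs_add_le _ _) (add_le_add (le_vecInfNorm u r) (le_vecInfNorm v r))

lemma vecInfNorm_sum_le {m ι : Type*} [Fintype m] (s : Finset ι) (f : ι → (m → ℝ)) :
    vecInfNorm (∑ x ∈ s, f x) ≤ ∑ x ∈ s, vecInfNorm (f x) := by
  classical
  induction s using Finset.induction_on with
  | empty =>
      rcases isEmpty_or_nonempty m with h | h
      · simp [vecInfNorm, Real.iSup_of_isEmpty]
      · simp [vecInfNorm, ciSup_const]
  | insert x s hx ih =>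
      rw [Finset.sum_insert hx, Finset.sum_insert hx]
      exact le_trans (vecInfNorm_add_le _ _) (by linarith)

lemma mulVec_finsum {p q : ℕ} (B : Matrix (Fin p) (Fin q) ℝ) {ι : Type*} (s : Finset ι)
    (f : ι → Fin q → ℝ) : B.mulVec (∑ x ∈ s, f x) = ∑ x ∈ s, B.mulVec (f x) :=
  map_sum B.mulVecLin f s

/-- Small-gain estimate: along solutions of the coupled error recursion,
`‖H_i e_i(t)‖_∞ ≤ ‖H_i Ā_{ii}^t H_i^♭‖_∞ ‖H_i e_i(0)‖_∞
  + Σ_{j≠i} γ_{ij} max_{0 ≤ k ≤ t} ‖H_j e_j(k)‖_∞`. -/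
theorem small_gain_estimate
    (M : ℕ)
    (n τ : Fin M → ℕ)
    (A : ∀ i j : Fin M, Matrix (Fin (n i)) (Fin (n j)) ℝ)
    (H : ∀ i, Matrix (Fin (τ i)) (Fin (n i)) ℝ)
    (Hflat : ∀ i, Matrix (Fin (n i)) (Fin (τ i)) ℝ)
    (hrank : ∀ i, (H i).rank = n i)
    (hleft : ∀ i, Hflat i * H i = 1)
    (e : ∀ l : Fin M, ℕ → (Fin (n l) → ℝ))
    (i : Fin M)
    (hrec : ∀ t : ℕ, e i (t + 1) =
      (A i i).mulVec (e i t) + ∑ j ∈ Finset.univ.erase i, (A i j).mulVec (e j t))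
    (hSummable : ∀ j, j ≠ i →
      Summable (fun k : ℕ => matInfNorm (H i * (A i i) ^ k * A i j * Hflat j))) :
    ∀ t : ℕ,
      vecInfNorm ((H i).mulVec (e i t)) ≤
        matInfNorm (H i * (A i i) ^ t * Hflat i) * vecInfNorm ((H i).mulVec (e i 0))
        + ∑ j ∈ Finset.univ.erase i,
            (∑' k : ℕ, matInfNorm (H i * (A i i) ^ k * A i j * Hflat j))
              * ⨆ k : Fin (t + 1), vecInfNorm ((H j).mulVec (e j k)) := by
  classical
  set S : ℕ → (Fin (n i) → ℝ) :=
    fun t => ∑ j ∈ Finset.univ.erase i, (A i j).mulVec (e j t) with hS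
  -- explicit solution
  have key : ∀ t, e i t = ((A i i) ^ t).mulVec (e i 0)
      + ∑ k ∈ Finset.range t, ((A i i) ^ k).mulVec (S (t - 1 - k)) := by
    intro t
    induction t with
    | zero => simp [Matrix.one_mulVec]
    | succ t ih =>
      rw [hrec t, ih, Matrix.mulVec_add, mulVec_finsum]
      rw [Finset.sum_range_succ' (fun k => ((A i i) ^ k).mulVec (S (t + 1 - 1 - k))) t]
      simp only [Matrix.mulVec_mulVec, ← pow_succ', pow_zero, Matrix.one_mulVec]
      rw [add_assoc]
      congr 1
      rw [show (∑ k ∈ Finset.range t, (A i i ^ (k + 1)) *ᵥ S (t + 1 - 1 - (k + 1)))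
          = ∑ k ∈ Finset.range t, (A i i ^ (k + 1)) *ᵥ S (t - 1 - k) from
        Finset.sum_congr rfl fun k _ => by rw [show t + 1 - 1 - (k + 1) = t - 1 - k from by omega]]
      simp [hS]
  intro t
  have hbdd : ∀ (j : Fin M) (t : ℕ),
      BddAbove (Set.range fun k : Fin (t + 1) => vecInfNorm ((H j).mulVec (e j k))) :=
    fun j t => Set.Finite.bddAbove (Set.finite_range _)
  have hsup_nonneg : ∀ j : Fin M,
      0 ≤ ⨆ k : Fin (t + 1), vecInfNorm ((H j).mulVec (e j k)) := fun j =>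
    le_trans (vecInfNorm_nonneg _)
      (le_ciSup (f := fun k : Fin (t+1) => vecInfNorm ((H j).mulVec (e j k))) (hbdd j t) 0)
  -- rewrite H i e i t
  have hgoal_rw : (H i).mulVec (e i t) =
      (H i * (A i i) ^ t * Hflat i).mulVec ((H i).mulVec (e i 0))
      + ∑ k ∈ Finset.range t, ∑ j ∈ Finset.univ.erase i,
          (H i * (A i i) ^ k * A i j * Hflat j).mulVec ((H j).mulVec (e j (t - 1 - k))) := by
    have hid : ∀ (j : Fin M) (v : Fin (n j) → ℝ), (Hflat j).mulVec ((H j).mulVec v) = v := by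
      intro j v
      rw [Matrix.mulVec_mulVec, hleft j, Matrix.one_mulVec]
    rw [key t, Matrix.mulVec_add, mulVec_finsum]
    congr 1
    · simp only [Matrix.mulVec_mulVec]
      rw [Matrix.mul_assoc (H i * (A i i) ^ t) (Hflat i) (H i), hleft i, Matrix.mul_one]
    · refine Finset.sum_congr rfl fun k _ => ?_
      rw [hS]
      simp only [mulVec_finsum]
      refine Finset.sum_congr rfl fun j _ => ?_
      simp only [Matrix.mulVec_mulVec]
      rw [Matrix.mul_assoc (H i * (A i i) ^ k * A i j) (Hflat j) (H j), hleft j, Matrix.mul_one,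
        Matrix.mul_assoc (H i) ((A i i) ^ k) (A i j)]
  rw [hgoal_rw]
  refine le_trans (vecInfNorm_add_le _ _) (add_le_add ?_ ?_)
  · exact vecInfNorm_mulVec_le _ _
  · refine le_trans (vecInfNorm_sum_le _ _) ?_
    have hstep : ∀ k ∈ Finset.range t,
        vecInfNorm (∑ j ∈ Finset.univ.erase i,
          (H i * (A i i) ^ k * A i j * Hflat j).mulVec ((H j).mulVec (e j (t - 1 - k)))) ≤
        ∑ j ∈ Finset.univ.erase i, matInfNorm (H i * (A i i) ^ k * A i j * Hflat j)
          * ⨆ m : Fin (t + 1), vecInfNorm ((H j).mulVec (e j m)) := by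
      intro k hk
      refine le_trans (vecInfNorm_sum_le _ _) (Finset.sum_le_sum fun j _ => ?_)
      refine le_trans (vecInfNorm_mulVec_le _ _) ?_
      refine mul_le_mul_of_nonneg_left ?_ (matInfNorm_nonneg _)
      have : t - 1 - k < t + 1 := by omega
      exact le_ciSup (f := fun m : Fin (t+1) => vecInfNorm ((H j).mulVec (e j m)))
        (hbdd j t) ⟨t - 1 - k, this⟩
    refine le_trans (Finset.sum_le_sum hstep) ?_
    rw [Finset.sum_comm]
    refine Finset.sum_le_sum fun j hj => ?_
    have hji : j ≠ i := Finset.ne_of_mem_erase hj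
    rw [← Finset.sum_mul]
    refine mul_le_mul_of_nonneg_right ?_ (hsup_nonneg j)
    exact Summable.sum_le_tsum (Finset.range t) (fun k _ => matInfNorm_nonneg _) (hSummable j hji)
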